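/- Let Ω = (0,1)×(0,1) with variables (s,r), let K_⊥ > 0, Δt > 0, ν ≥ 0. Let T^⋆, T^{n+1} : [0,1]×[0,1] → ℝ be smooth (three times continuously differentiable) functions satisfying for all (s,r) ∈ Ω: (T^{n+1} − T^⋆)/Δt − K_⊥ ∂_{rr} T^{n+1} = 0, and such that ∂_s(∂_r T^{n+1}(s,r)) = 0 at r = 0 and r = 1 for all s ∈ (0,1). Then ∫_Ω ν [ (∂_s T^{n+1})² − (∂_s T^⋆)² ] dr ds ≤ 0. -/

import Mathlib

open Set MeasureTheory

noncomputable section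
namespace RadialStepAux

variable {E G : Type*} [NormedAddCommGroup E] [NormedSpace ℝ E]
  [NormedAddCommGroup G] [NormedSpace ℝ G]

lemma hasDerivAt_slice_fst {g : ℝ × ℝ → E} {g' : ℝ × ℝ →L[ℝ] E} {s r : ℝ}
    (h : HasFDerivAt g g' (s, r)) :
    HasDerivAt (fun x => g (x, r)) (g' (1, 0)) s := by
  have hc : HasDerivAt (fun x : ℝ => ((x, r) : ℝ × ℝ)) ((1 : ℝ), (0 : ℝ)) s :=
    (hasDerivAt_id s).prodMk (hasDerivAt_const s r)
  simpa [Function.comp_def] using h.comp_hasDerivAt s hc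

lemma hasDerivAt_slice_snd {g : ℝ × ℝ → E} {g' : ℝ × ℝ →L[ℝ] E} {s r : ℝ}
    (h : HasFDerivAt g g' (s, r)) :
    HasDerivAt (fun y => g (s, y)) (g' (0, 1)) r := by
  have hc : HasDerivAt (fun y : ℝ => ((s, y) : ℝ × ℝ)) ((0 : ℝ), (1 : ℝ)) r :=
    (hasDerivAt_const r s).prodMk (hasDerivAt_id r)
  simpa [Function.comp_def] using h.comp_hasDerivAt r hc

lemma hasDerivAt_clm_apply_const {c : ℝ → (G →L[ℝ] E)} {c' : G →L[ℝ] E} {x : ℝ}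
    (h : HasDerivAt c c' x) (v : G) : HasDerivAt (fun t => c t v) (c' v) x := by
  simpa [Function.comp_def] using (ContinuousLinearMap.apply ℝ E v).hasFDerivAt.comp_hasDerivAt x h

lemma hasFDerivAt_clm_apply_const {g : G → (G →L[ℝ] E)} {g' : G →L[ℝ] (G →L[ℝ] E)} {x : G}
    (h : HasFDerivAt g g' x) (v : G) :
    HasFDerivAt (fun t => g t v) ((ContinuousLinearMap.apply ℝ E v).comp g') x :=
  (ContinuousLinearMap.apply ℝ E v).hasFDerivAt.comp x h

section F
variable {F : ℝ × ℝ → ℝ} (hF : ContDiff ℝ 3 F)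

local notation "f1" => fderiv ℝ F
local notation "f2" => fderiv ℝ (fderiv ℝ F)
local notation "f3" => fderiv ℝ (fderiv ℝ (fderiv ℝ F))

include hF

lemma hd1 (p : ℝ × ℝ) : HasFDerivAt F (f1 p) p :=
  ((hF.differentiable (by norm_num)).differentiableAt).hasFDerivAt

lemma hd2 (p : ℝ × ℝ) : HasFDerivAt (fderiv ℝ F) (f2 p) p :=
  (((hF.fderiv_right (m := 2) (by norm_num)).differentiable
    (by norm_num)).differentiableAt).hasFDerivAt

lemma hd3 (p : ℝ × ℝ) : HasFDerivAt (fderiv ℝ (fderiv ℝ F)) (f3 p) p :=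
  ((((hF.fderiv_right (m := 2) (by norm_num)).fderiv_right (m := 1)
    (by norm_num)).differentiable (by norm_num)).differentiableAt).hasFDerivAt

lemma pd_snd (x y : ℝ) : deriv (fun t => F (x, t)) y = f1 (x, y) (0, 1) :=
  (hasDerivAt_slice_snd (hd1 hF (x, y))).deriv

lemma pd_fst (x y : ℝ) : deriv (fun t => F (t, y)) x = f1 (x, y) (1, 0) :=
  (hasDerivAt_slice_fst (hd1 hF (x, y))).deriv

lemma pd_snd_snd (x y : ℝ) :
    deriv (deriv (fun t => F (x, t))) y = f2 (x, y) (0, 1) (0, 1) := by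
  have h4 : deriv (fun t => F (x, t)) = fun t => f1 (x, t) (0, 1) :=
    funext fun t => pd_snd hF x t
  rw [h4]
  exact (hasDerivAt_clm_apply_const (hasDerivAt_slice_snd (hd2 hF (x, y))) (0, 1)).deriv

lemma sym2 (p v w : ℝ × ℝ) : f2 p v w = f2 p w v :=
  second_derivative_symmetric (fun q => hd1 hF q) (hd2 hF p) v w

lemma sym3a (p v w z : ℝ × ℝ) : f3 p v w z = f3 p w v z := by
  rw [second_derivative_symmetric (fun q => hd2 hF q) (hd3 hF p) v w]

lemma sym3b (p v w z : ℝ × ℝ) : f3 p v w z = f3 p v z w := by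
  have h1 : HasFDerivAt (fun q => f2 q w z)
      ((ContinuousLinearMap.apply ℝ ℝ z).comp
        ((ContinuousLinearMap.apply ℝ (ℝ × ℝ →L[ℝ] ℝ) w).comp (f3 p))) p :=
    hasFDerivAt_clm_apply_const (hasFDerivAt_clm_apply_const (hd3 hF p) w) z
  have h2 : HasFDerivAt (fun q => f2 q z w)
      ((ContinuousLinearMap.apply ℝ ℝ w).comp
        ((ContinuousLinearMap.apply ℝ (ℝ × ℝ →L[ℝ] ℝ) z).comp (f3 p))) p :=
    hasFDerivAt_clm_apply_const (hasFDerivAt_clm_apply_const (hd3 hF p) z) w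
  have e : (fun q => f2 q w z) = (fun q => f2 q z w) :=
    funext fun q => sym2 (hF := hF) q w z
  calc f3 p v w z = fderiv ℝ (fun q => f2 q w z) p v := by rw [h1.fderiv]; rfl
    _ = fderiv ℝ (fun q => f2 q z w) p v := by rw [e]
    _ = f3 p v z w := by rw [h2.fderiv]; rfl

end F

/-- The 1-D inner estimate: if `φ - ψ = Δt Kp φ''` on `(0,1)` and `φ' = 0` at the
endpoints, then `∫ ν (φ² - ψ²) ≤ 0`. -/
lemma inner_est (Kp Δt ν : ℝ) (hKp : 0 < Kp) (hΔt : 0 < Δt) (hν : 0 ≤ ν)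
    (φ dφ w ψ : ℝ → ℝ)
    (hφ : ∀ r, HasDerivAt φ (dφ r) r)
    (hdφ : ∀ r, HasDerivAt dφ (w r) r)
    (hw : Continuous w) (hψ : Continuous ψ)
    (hb0 : dφ 0 = 0) (hb1 : dφ 1 = 0)
    (hrel : ∀ r ∈ Ioo (0:ℝ) 1, φ r - ψ r = Δt * (Kp * w r)) :
    ∫ r in (0:ℝ)..1, ν * (φ r ^ 2 - ψ r ^ 2) ≤ 0 := by
  have hφd : Differentiable ℝ φ := fun x => (hφ x).differentiableAt
  have hdφd : Differentiable ℝ dφ := fun x => (hdφ x).differentiableAt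
  have hφc : Continuous φ := hφd.continuous
  have hdφc : Continuous dφ := hdφd.continuous
  have hFTC : ∫ r in (0:ℝ)..1, (dφ r * dφ r + φ r * w r)
      = φ 1 * dφ 1 - φ 0 * dφ 0 := by
    apply intervalIntegral.integral_eq_sub_of_hasDerivAt
      (f := fun r => φ r * dφ r)
    · exact fun x _ => (hφ x).mul (hdφ x)
    · exact ((hdφc.mul hdφc).add (hφc.mul hw)).intervalIntegrable 0 1
  rw [hb0, hb1] at hFTC
  simp only [mul_zero, sub_zero] at hFTC
  have hint1 : IntervalIntegrable (fun r => dφ r * dφ r) volume 0 1 :=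
    (hdφc.mul hdφc).intervalIntegrable 0 1
  have hint2 : IntervalIntegrable (fun r => φ r * w r) volume 0 1 :=
    (hφc.mul hw).intervalIntegrable 0 1
  have hsplit := intervalIntegral.integral_add hint1 hint2
  rw [hFTC] at hsplit
  have hpos : 0 ≤ ∫ r in (0:ℝ)..1, dφ r * dφ r :=
    intervalIntegral.integral_nonneg zero_le_one (fun x _ => mul_self_nonneg _)
  have hkey : ∫ r in (0:ℝ)..1, φ r * w r ≤ 0 := by linarith
  have hmono : (∫ r in (0:ℝ)..1, ν * (φ r ^ 2 - ψ r ^ 2))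
      ≤ ∫ r in (0:ℝ)..1, (2 * ν * Δt * Kp) * (φ r * w r) := by
    apply intervalIntegral.integral_mono_ae_restrict zero_le_one
    · exact ((continuous_const.mul ((hφc.pow 2).sub (hψ.pow 2))).intervalIntegrable 0 1)
    · exact ((continuous_const.mul (hφc.mul hw)).intervalIntegrable 0 1)
    · have hres : (volume : Measure ℝ).restrict (Icc (0:ℝ) 1)
          = volume.restrict (Ioo (0:ℝ) 1) :=
        (Measure.restrict_congr_set Ioo_ae_eq_Icc).symm
      rw [hres]
      refine (ae_restrict_iff' measurableSet_Ioo).2 (ae_of_all _ fun r hr => ?_)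
      have h2 : Δt * (Kp * w r) = φ r - ψ r := (hrel r hr).symm
      have h3 : 0 ≤ ν * (φ r - ψ r) ^ 2 := mul_nonneg hν (sq_nonneg _)
      have h4 : 2 * ν * Δt * Kp * (φ r * w r)
          = ν * (φ r ^ 2 - ψ r ^ 2) + ν * (φ r - ψ r) ^ 2 := by
        linear_combination (2 * ν * φ r) * h2
      show ν * (φ r ^ 2 - ψ r ^ 2) ≤ 2 * ν * Δt * Kp * (φ r * w r)
      linarith
  have hlast : (∫ r in (0:ℝ)..1, (2 * ν * Δt * Kp) * (φ r * w r)) ≤ 0 := by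
    rw [intervalIntegral.integral_const_mul]
    exact mul_nonpos_of_nonneg_of_nonpos (by positivity) hkey
  linarith

end RadialStepAux
end

set_option maxHeartbeats 1000000 in
open RadialStepAux in
/-- The radial implicit heat step does not increase the weighted L² norm of
the parallel derivative: estimate used in the proof of Proposition 3.1 for
the directional splitting scheme of the 2D nonlinear heat equation.
`Ts s r` and `Tn1 s r` denote `T^⋆(s,r)` and `T^{n+1}(s,r)`. -/
theorem radial_step_parallel_derivative_estimate
    (Kp Δt ν : ℝ) (hKp : 0 < Kp) (hΔt : 0 < Δt) (hν : 0 ≤ ν)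
    (Ts Tn1 : ℝ → ℝ → ℝ)
    (hTs : ContDiff ℝ 3 (Function.uncurry Ts))
    (hTn1 : ContDiff ℝ 3 (Function.uncurry Tn1))
    (hpde : ∀ s ∈ Ioo (0:ℝ) 1, ∀ r ∈ Ioo (0:ℝ) 1,
      (Tn1 s r - Ts s r) / Δt
        - Kp * deriv (deriv (fun y => Tn1 s y)) r = 0)
    (hmixed0 : ∀ s ∈ Ioo (0:ℝ) 1,
      deriv (fun x => deriv (fun y => Tn1 x y) 0) s = 0)
    (hmixed1 : ∀ s ∈ Ioo (0:ℝ) 1,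
      deriv (fun x => deriv (fun y => Tn1 x y) 1) s = 0) :
    (∫ s in (0:ℝ)..1, ∫ r in (0:ℝ)..1,
      ν * ((deriv (fun x => Tn1 x r) s)^2 - (deriv (fun x => Ts x r) s)^2))
    ≤ 0 := by
  have hF : ContDiff ℝ 3 (Function.uncurry Tn1) := hTn1
  have hFs : ContDiff ℝ 3 (Function.uncurry Ts) := hTs
  -- partial-derivative abbreviations (as plain fderiv applications)
  set f1 := fderiv ℝ (Function.uncurry Tn1) with hf1def
  set f2 := fderiv ℝ f1 with hf2def
  set f3 := fderiv ℝ f2 with hf3def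
  set g1 := fderiv ℝ (Function.uncurry Ts) with hg1def
  -- rewrite the integrand in terms of fderivs
  have hA : ∀ (s r : ℝ), deriv (fun x => Tn1 x r) s = f1 (s, r) (1, 0) :=
    fun s r => pd_fst hF s r
  have hB : ∀ (s r : ℝ), deriv (fun x => Ts x r) s = g1 (s, r) (1, 0) :=
    fun s r => pd_fst hFs s r
  simp only [hA, hB]
  -- it suffices to bound the inner integral for a.e. s
  have hinner : ∀ s ∈ Ioo (0:ℝ) 1,
      (∫ r in (0:ℝ)..1,
        ν * ((f1 (s, r) (1, 0)) ^ 2 - (g1 (s, r) (1, 0)) ^ 2)) ≤ 0 := by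
    intro s hs
    -- the slice functions
    refine inner_est Kp Δt ν hKp hΔt hν
      (fun r => f1 (s, r) (1, 0))
      (fun r => f2 (s, r) (0, 1) (1, 0))
      (fun r => f3 (s, r) (0, 1) (0, 1) (1, 0))
      (fun r => g1 (s, r) (1, 0))
      ?_ ?_ ?_ ?_ ?_ ?_ ?_
    · intro r
      exact hasDerivAt_clm_apply_const (hasDerivAt_slice_snd (hd2 hF (s, r))) (1, 0)
    · intro r
      exact hasDerivAt_clm_apply_const
        (hasDerivAt_clm_apply_const (hasDerivAt_slice_snd (E := ℝ × ℝ →L[ℝ] ℝ × ℝ →L[ℝ] ℝ)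
          (hd3 hF (s, r))) (0, 1)) (1, 0)
    · -- continuity of r ↦ f3 (s,r) (0,1) (0,1) (1,0)
      have hc3 : ContDiff ℝ 0 (fun p : ℝ × ℝ => f3 p (0, 1) (0, 1) (1, 0)) := by
        have h2 : ContDiff ℝ 1 f2 :=
          (hF.fderiv_right (m := 2) (by norm_num)).fderiv_right (m := 1) (by norm_num)
        exact (((h2.fderiv_right (m := 0) (by norm_num)).clm_apply
          contDiff_const).clm_apply contDiff_const).clm_apply contDiff_const
      exact hc3.continuous.comp (continuous_const.prodMk continuous_id)
    · have hcψ : ContDiff ℝ 2 (fun p : ℝ × ℝ => g1 p (1, 0)) :=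
        (hFs.fderiv_right (m := 2) (by norm_num)).clm_apply contDiff_const
      exact hcψ.continuous.comp (continuous_const.prodMk continuous_id)
    · -- boundary value at r = 0
      have e1 : (fun x => deriv (fun y => Tn1 x y) 0) = fun x => f1 (x, 0) (0, 1) :=
        funext fun x => pd_snd hF x 0
      have hm := hmixed0 s hs
      rw [e1] at hm
      have hd := (hasDerivAt_clm_apply_const
        (hasDerivAt_slice_fst (hd2 hF (s, 0))) (0, 1)).deriv
      rw [hd] at hm
      show fderiv ℝ (fderiv ℝ (Function.uncurry Tn1)) (s, 0) (0, 1) (1, 0) = 0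
      rw [sym2 hF (s, 0) (0, 1) (1, 0)]
      exact hm
    · -- boundary value at r = 1
      have e1 : (fun x => deriv (fun y => Tn1 x y) 1) = fun x => f1 (x, 1) (0, 1) :=
        funext fun x => pd_snd hF x 1
      have hm := hmixed1 s hs
      rw [e1] at hm
      have hd := (hasDerivAt_clm_apply_const
        (hasDerivAt_slice_fst (hd2 hF (s, 1))) (0, 1)).deriv
      rw [hd] at hm
      show fderiv ℝ (fderiv ℝ (Function.uncurry Tn1)) (s, 1) (0, 1) (1, 0) = 0
      rw [sym2 hF (s, 1) (0, 1) (1, 0)]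
      exact hm
    · -- the differentiated PDE
      intro r hr
      have h1 : HasDerivAt (fun x => (Tn1 x r - Ts x r) / Δt)
          ((f1 (s, r) (1, 0) - g1 (s, r) (1, 0)) / Δt) s :=
        ((hasDerivAt_slice_fst (hd1 hF (s, r))).sub
          (hasDerivAt_slice_fst (hd1 hFs (s, r)))).div_const Δt
      have h2 : HasDerivAt (fun x => Kp * (f2 (x, r) (0, 1) (0, 1)))
          (Kp * f3 (s, r) (1, 0) (0, 1) (0, 1)) s :=
        (hasDerivAt_clm_apply_const
          (hasDerivAt_clm_apply_const (hasDerivAt_slice_fst (E := ℝ × ℝ →L[ℝ] ℝ × ℝ →L[ℝ] ℝ)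
            (hd3 hF (s, r))) (0, 1))
          (0, 1)).const_mul Kp
      have heq : (fun x => Kp * (f2 (x, r) (0, 1) (0, 1)))
          =ᶠ[nhds s] (fun x => (Tn1 x r - Ts x r) / Δt) := by
        filter_upwards [Ioo_mem_nhds hs.1 hs.2] with x hx
        have hp := hpde x hx r hr
        have hss : deriv (deriv (fun y => Tn1 x y)) r = f2 (x, r) (0, 1) (0, 1) :=
          pd_snd_snd hF x r
        rw [hss] at hp
        linarith
      have h1' : HasDerivAt (fun x => Kp * (f2 (x, r) (0, 1) (0, 1)))
          ((f1 (s, r) (1, 0) - g1 (s, r) (1, 0)) / Δt) s :=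
        h1.congr_of_eventuallyEq heq
      have huniq : (f1 (s, r) (1, 0) - g1 (s, r) (1, 0)) / Δt
          = Kp * f3 (s, r) (1, 0) (0, 1) (0, 1) := h1'.unique h2
      have hsym : f3 (s, r) (1, 0) (0, 1) (0, 1) = f3 (s, r) (0, 1) (0, 1) (1, 0) := by
        rw [sym3a hF (s, r) (1, 0) (0, 1) (0, 1), sym3b hF (s, r) (0, 1) (1, 0) (0, 1)]
      rw [hsym] at huniq
      field_simp at huniq
      linarith
  -- conclude by integrating in s
  rw [intervalIntegral.integral_of_le zero_le_one]
  apply integral_nonpos_of_ae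
  have hres : (volume : Measure ℝ).restrict (Ioc (0:ℝ) 1)
      = volume.restrict (Ioo (0:ℝ) 1) :=
    (Measure.restrict_congr_set Ioo_ae_eq_Ioc).symm
  rw [hres]
  exact (ae_restrict_iff' measurableSet_Ioo).2 (ae_of_all _ fun s hs => hinner s hs)
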